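/- Let u : ℝ² × [0,∞) → ℝ² be a time-dependent Lipschitz velocity field of the form u(x,t) = x^⊥ + h(x,t) with |h(x,t)| ≤ M|x|² and |u(x,t)| ≤ 1 for all (x,t), and let Φ be its flow map with Φ(0,t)=0. If sup_{x,t}|∇Φ(x,t)| ≤ K, then for x with |x| ≤ 1/(100MK), the polar-angle function θ(x,t) of Φ(x,t) satisfies |dθ/dt − 1| ≤ 1/100, and hence −2π + 0.99t ≤ θ(x,t) ≤ 1.01t + 2π for all t ≥ 0; while for |x| ≥ 100K, θ(x,t) ≤ 0.01t + 2π. -/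

import Mathlib

open Real Set Filter Topology

theorem stmt17 (M K : ℝ) (hM : 0 < M) (hK : 1 ≤ K)
    (u h : ℂ → ℝ → ℂ)
    (hu : ∀ x t, u x t = Complex.I * x + h x t)
    (hh : ∀ x t, ‖h x t‖ ≤ M * (‖x‖) ^ 2)
    (hub : ∀ x t, ‖u x t‖ ≤ 1)
    (Φ : ℂ → ℝ → ℂ)
    (hflow : ∀ x t, HasDerivAt (Φ x) (u (Φ x t) t) t)
    (hΦ0 : ∀ x, Φ x 0 = x)
    (horigin : ∀ t, Φ 0 t = 0)
    (hbilip : ∀ x t, ‖x‖ / K ≤ ‖Φ x t‖ ∧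
      ‖Φ x t‖ ≤ K * ‖x‖)
    (θ θ' : ℂ → ℝ → ℝ)
    (hθ : ∀ x t, x ≠ 0 →
      Φ x t = (‖Φ x t‖ : ℂ) * Complex.exp (θ x t * Complex.I))
    (hθd : ∀ x t, x ≠ 0 → HasDerivAt (θ x) (θ' x t) t)
    (hθ'eq : ∀ x t, x ≠ 0 → θ' x t = (u (Φ x t) t / Φ x t).im)
    (hθ0 : ∀ x, x ≠ 0 → θ x 0 ∈ Ico 0 (2 * π)) :
    (∀ x, x ≠ 0 → ‖x‖ ≤ 1 / (100 * M * K) → ∀ t ≥ (0:ℝ),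
        |θ' x t - 1| ≤ 1 / 100 ∧
        -(2 * π) + 0.99 * t ≤ θ x t ∧ θ x t ≤ 1.01 * t + 2 * π) ∧
    (∀ x, x ≠ 0 → 100 * K ≤ ‖x‖ → ∀ t ≥ (0:ℝ),
        θ x t ≤ 0.01 * t + 2 * π) := by
  have hπ : 0 < π := Real.pi_pos
  have hK0 : 0 < K := lt_of_lt_of_le one_pos hK
  constructor
  · intro x hx hxs t ht
    have hx0 : 0 < ‖x‖ := norm_pos_iff.mpr hx
    have hΦpos : ∀ s : ℝ, 0 < ‖Φ x s‖ := by
      intro s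
      have h1 := (hbilip x s).1
      have : 0 < ‖x‖ / K := by positivity
      linarith
    have hΦne : ∀ s : ℝ, Φ x s ≠ 0 := fun s => by
      intro h0; have := hΦpos s; rw [h0] at this; simp at this
    have hθ'b : ∀ s : ℝ, |θ' x s - 1| ≤ 1 / 100 := by
      intro s
      have habs := hΦpos s
      rw [hθ'eq x s hx, hu]
      have hdiv : (Complex.I * Φ x s + h (Φ x s) s) / Φ x s
          = Complex.I + h (Φ x s) s / Φ x s := by
        field_simp [hΦne s]
      rw [hdiv]
      have him : (Complex.I + h (Φ x s) s / Φ x s).im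
          = 1 + (h (Φ x s) s / Φ x s).im := by simp
      rw [him]
      have h1 : |(h (Φ x s) s / Φ x s).im| ≤ ‖h (Φ x s) s / Φ x s‖ :=
        Complex.abs_im_le_norm _
      rw [norm_div] at h1
      have h2 : ‖h (Φ x s) s‖ / ‖Φ x s‖
          ≤ M * ‖Φ x s‖ := by
        rw [div_le_iff₀ habs]
        have := hh (Φ x s) s
        nlinarith
      have h3 := (hbilip x s).2
      have h4 : M * ‖Φ x s‖ ≤ 1 / 100 := by
        have hMK : 0 < 100 * M * K := by positivity
        rw [le_div_iff₀ hMK] at hxs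
        nlinarith
      have h5 : |(h (Φ x s) s / Φ x s).im| ≤ 1 / 100 := by linarith
      have := abs_le.mp h5
      rw [abs_le]
      constructor <;> simp <;> linarith [this.1, this.2]
    have key : |(θ x t - t) - (θ x 0 - 0)| ≤ 1 / 100 * |t - 0| := by
      have := convex_univ.norm_image_sub_le_of_norm_hasDerivWithin_le
        (f := fun s => θ x s - s) (f' := fun s => θ' x s - 1)
        (fun s _ => ((hθd x s hx).sub (hasDerivAt_id s)).hasDerivWithinAt)
        (fun s _ => by simpa using hθ'b s) (mem_univ 0) (mem_univ t)
      simpa [Real.norm_eq_abs] using this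
    rw [sub_zero, sub_zero, abs_of_nonneg ht] at key
    have hkey := abs_le.mp key
    have h0 := hθ0 x hx
    have h0a : 0 ≤ θ x 0 := h0.1
    have h0b : θ x 0 < 2 * π := h0.2
    refine ⟨hθ'b t, ?_, ?_⟩ <;> [nlinarith [hkey.1]; nlinarith [hkey.2]]
  · intro x hx hxs t ht
    have hx0 : 0 < ‖x‖ := norm_pos_iff.mpr hx
    have hΦbig : ∀ s : ℝ, (100 : ℝ) ≤ ‖Φ x s‖ := by
      intro s
      have h1 := (hbilip x s).1
      have : (100 : ℝ) ≤ ‖x‖ / K := by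
        rw [le_div_iff₀ hK0]; nlinarith
      linarith
    have hΦne : ∀ s : ℝ, Φ x s ≠ 0 := fun s => by
      intro h0; have := hΦbig s; rw [h0] at this; simp at this; linarith
    have hθ'b : ∀ s : ℝ, |θ' x s| ≤ 1 / 100 := by
      intro s
      have habs : 0 < ‖Φ x s‖ := by linarith [hΦbig s]
      rw [hθ'eq x s hx]
      have h1 : |(u (Φ x s) s / Φ x s).im| ≤ ‖u (Φ x s) s / Φ x s‖ :=
        Complex.abs_im_le_norm _
      rw [norm_div] at h1
      have h2 : ‖u (Φ x s) s‖ / ‖Φ x s‖ ≤ 1 / 100 := by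
        rw [div_le_iff₀ habs]
        have := hub (Φ x s) s
        nlinarith [hΦbig s, norm_nonneg (u (Φ x s) s)]
      linarith
    have key : |θ x t - θ x 0| ≤ 1 / 100 * |t - 0| := by
      have := convex_univ.norm_image_sub_le_of_norm_hasDerivWithin_le
        (f := θ x) (f' := θ' x)
        (fun s _ => (hθd x s hx).hasDerivWithinAt)
        (fun s _ => by simpa using hθ'b s) (mem_univ 0) (mem_univ t)
      simpa [Real.norm_eq_abs] using this
    rw [sub_zero, abs_of_nonneg ht] at key
    have hkey := abs_le.mp key
    have h0 := hθ0 x hx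
    nlinarith [hkey.2, h0.2]
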